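/- Let f be a homeomorphism of a compact metric space X such that the orbit {f^n(x₀) : n ∈ ℤ} of some regular point x₀ is dense in X. Then f is recurrent. -/

import Mathlib

open Filter Topology Metric

/-- `f` is recurrent with respect to the metric `m`: some sequence of iterates
`f^[n k]` with `n k → ∞` converges uniformly to the identity. -/
def RecurrentWith {X : Type*} (m : MetricSpace X) (f : X → X) : Prop :=
  ∃ n : ℕ → ℕ, Filter.Tendsto n Filter.atTop Filter.atTop ∧
    ∀ ε > 0, ∀ᶠ k in Filter.atTop, ∀ x, @dist X m.toDist (f^[n k] x) x < ε

/-- `f` is a recurrent map of the metric space `X`. -/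
def IsRecurrent {X : Type*} [m : MetricSpace X] (f : X → X) : Prop :=
  RecurrentWith m f

/-- The k-th iterate (k an integer) of a homeomorphism. -/
def iterZ {X : Type*} [TopologicalSpace X] (f : X ≃ₜ X) (k : ℤ) : X → X :=
  if 0 ≤ k then (f : X → X)^[k.toNat] else (f.symm : X → X)^[(-k).toNat]

lemma iterZ_natCast {X : Type*} [TopologicalSpace X] (f : X ≃ₜ X) (n : ℕ) :
    iterZ f (n : ℤ) = (f : X → X)^[n] := by
  simp [iterZ]

lemma symm_iterate_apply {X : Type*} [TopologicalSpace X] (f : X ≃ₜ X) (m : ℕ) (x : X) :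
    (f.symm : X → X)^[m] ((f : X → X)^[m] x) = x := by
  have : Function.LeftInverse (f.symm : X → X) (f : X → X) := fun y => f.symm_apply_apply y
  exact (this.iterate m) x

lemma iterZ_neg_natCast {X : Type*} [TopologicalSpace X] (f : X ≃ₜ X) (m : ℕ) :
    iterZ f (-(m : ℤ)) = (f.symm : X → X)^[m] := by
  rcases Nat.eq_zero_or_pos m with h | h
  · subst h; simp [iterZ]
  · have : ¬ (0 : ℤ) ≤ -(m : ℤ) := by
      simp only [not_le]
      exact neg_neg_iff_pos.mpr (by exact_mod_cast h)
    simp [iterZ, this, h.ne']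

lemma iterZ_comm_iterate {X : Type*} [TopologicalSpace X] (f : X ≃ₜ X) (j : ℤ) (n : ℕ) (x : X) :
    iterZ f j ((f : X → X)^[n] x) = (f : X → X)^[n] (iterZ f j x) := by
  unfold iterZ
  split
  · rw [← Function.iterate_add_apply, ← Function.iterate_add_apply, add_comm]
  · have hc : Function.Commute (f.symm : X → X) (f : X → X) := by
      intro y; simp
    exact hc.iterate_iterate _ n x

/-- If a homeomorphism of a compact metric space has a regular point (the family
of all iterates is equicontinuous on the orbit closure of the point) whose orbit
is dense, then the homeomorphism is recurrent. -/
theorem recurrent_of_regular_dense_orbit {X : Type*} [MetricSpace X] [CompactSpace X]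
    (f : X ≃ₜ X) (x₀ : X)
    (hreg : ∀ ε > (0 : ℝ), ∃ η > (0 : ℝ),
      ∀ x ∈ closure {y : X | ∃ k : ℤ, iterZ f k x₀ = y},
      ∀ y ∈ closure {y : X | ∃ k : ℤ, iterZ f k x₀ = y},
        dist x y < η → ∀ k : ℤ, dist (iterZ f k x) (iterZ f k y) < ε)
    (hdense : Dense {y : X | ∃ k : ℤ, iterZ f k x₀ = y}) :
    IsRecurrent (f : X → X) := by
  have hmem : ∀ z : X, z ∈ closure {y : X | ∃ k : ℤ, iterZ f k x₀ = y} := fun z => by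
    rw [hdense.closure_eq]; exact Set.mem_univ z
  -- Claim A: the point x₀ returns arbitrarily close to itself along arbitrarily large times.
  have claimA : ∀ δ > (0 : ℝ), ∀ N : ℕ, ∃ n : ℕ, N + 1 ≤ n ∧
      dist ((f : X → X)^[n] x₀) x₀ < δ := by
    intro δ hδ N
    obtain ⟨η, hη, hη'⟩ := hreg δ hδ
    set M := N + 1 with hM
    set g : ℕ → X := fun i => (f : X → X)^[i * M] x₀ with hg
    obtain ⟨x, -, φ, hφ, hconv⟩ := isCompact_univ.tendsto_subseq (fun i => Set.mem_univ (g i))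
    obtain ⟨K, hK⟩ := Metric.tendsto_atTop.mp hconv (η / 2) (by linarith)
    set a := φ K * M with ha
    set b := φ (K + 1) * M with hb
    have hab : a + M ≤ b := by
      have hlt : φ K + 1 ≤ φ (K + 1) := hφ (Nat.lt_succ_self K)
      calc a + M = (φ K + 1) * M := by ring
        _ ≤ φ (K + 1) * M := Nat.mul_le_mul_right M hlt
    set n := b - a with hn
    have hbn : b = a + n := by omega
    refine ⟨n, by omega, ?_⟩
    have hd : dist (g (φ K)) (g (φ (K + 1))) < η :=
      calc dist (g (φ K)) (g (φ (K + 1)))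
          ≤ dist (g (φ K)) x + dist (g (φ (K + 1))) x := dist_triangle_right _ _ _
        _ < η / 2 + η / 2 := add_lt_add (hK K le_rfl) (hK (K + 1) (Nat.le_succ K))
        _ = η := by ring
    have key := hη' (g (φ K)) (hmem _) (g (φ (K + 1))) (hmem _) hd (-(a : ℤ))
    rw [iterZ_neg_natCast] at key
    have h1 : (f.symm : X → X)^[a] (g (φ K)) = x₀ := symm_iterate_apply f a x₀
    have h2 : (f.symm : X → X)^[a] (g (φ (K + 1))) = (f : X → X)^[n] x₀ := by
      have : g (φ (K + 1)) = (f : X → X)^[a] ((f : X → X)^[n] x₀) := by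
        show (f : X → X)^[b] x₀ = _
        rw [hbn, Function.iterate_add_apply]
      rw [this]
      exact symm_iterate_apply f a _
    rw [h1, h2, dist_comm] at key
    exact key
  -- Claim B: uniform recurrence for arbitrarily large times.
  have claimB : ∀ ε > (0 : ℝ), ∀ N : ℕ, ∃ n : ℕ, N + 1 ≤ n ∧
      ∀ x : X, dist ((f : X → X)^[n] x) x < ε := by
    intro ε hε N
    obtain ⟨η, hη, hη'⟩ := hreg (ε / 3) (by linarith)
    set δ := min η (ε / 3) with hδdef
    have hδ : 0 < δ := lt_min hη (by linarith)
    obtain ⟨n, hn, hrec⟩ := claimA δ hδ N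
    refine ⟨n, hn, fun x => ?_⟩
    obtain ⟨y, hy⟩ := Metric.dense_iff.mp hdense x δ hδ
    obtain ⟨j, hj⟩ := hy.2
    have hyx : dist y x < δ := mem_ball.mp hy.1
    have h1 : dist ((f : X → X)^[n] x) ((f : X → X)^[n] y) < ε / 3 := by
      have hxy : dist x y < η := by
        rw [dist_comm]; exact lt_of_lt_of_le hyx (min_le_left _ _)
      have := hη' x (hmem x) y (hmem y) hxy (n : ℤ)
      rwa [iterZ_natCast] at this
    have h2 : dist ((f : X → X)^[n] y) y < ε / 3 := by
      have := hη' ((f : X → X)^[n] x₀) (hmem _) x₀ (hmem _)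
        (lt_of_lt_of_le hrec (min_le_left _ _)) j
      rw [iterZ_comm_iterate, hj] at this
      exact this
    have h3 : dist y x < ε / 3 := lt_of_lt_of_le hyx (min_le_right _ _)
    calc dist ((f : X → X)^[n] x) x
        ≤ dist ((f : X → X)^[n] x) ((f : X → X)^[n] y)
          + dist ((f : X → X)^[n] y) y + dist y x := dist_triangle4 _ _ _ _
      _ < ε / 3 + ε / 3 + ε / 3 := by linarith
      _ = ε := by ring
  -- Build the sequence of return times.
  have H : ∀ k : ℕ, ∃ n : ℕ, k + 1 ≤ n ∧
      ∀ x : X, dist ((f : X → X)^[n] x) x < 1 / (k + 1) :=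
    fun k => claimB (1 / (k + 1)) (by positivity) k
  choose n hn1 hn2 using H
  refine ⟨n, ?_, ?_⟩
  · exact tendsto_atTop_mono (fun k => (Nat.le_succ k).trans (hn1 k)) tendsto_id
  · intro ε hε
    obtain ⟨K, hK⟩ := exists_nat_one_div_lt hε
    filter_upwards [eventually_ge_atTop K] with k hk x
    have hmono : (1 : ℝ) / (k + 1) ≤ 1 / (K + 1) := by
      apply one_div_le_one_div_of_le (by positivity)
      exact_mod_cast Nat.succ_le_succ hk
    exact lt_of_lt_of_le (hn2 k x) (hmono.trans hK.le)
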